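/- Under the hypotheses of the exponential-condition barrier function (B ≤ 0 on the initial set X₀, B > 0 on the unsafe set X_u, and ∇B · F − λB ≤ 0 on X), any trajectory of ẋ = F(x) starting in X₀ and remaining in X never enters X_u. -/

import Mathlib

open Real Set Filter Topology

/-- Safety via an exponential-condition barrier certificate: if `B ≤ 0` on the
initial set `X₀`, `B > 0` on the unsafe set `X_u`, and `∇B · F − λB ≤ 0` on
`X`, then any trajectory of `ẋ = F(x)` starting in `X₀` and remaining in `X`
never enters `X_u`. -/
theorem barrier_certificate_safety {n : ℕ}
    (F : (Fin n → ℝ) → (Fin n → ℝ)) (hF : LocallyLipschitz F)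
    (B : (Fin n → ℝ) → ℝ) (hB : ContDiff ℝ 1 B)
    (X X₀ Xu : Set (Fin n → ℝ)) (hX₀ : X₀ ⊆ X) (hXu : Xu ⊆ X) (lam : ℝ)
    (hinit : ∀ y ∈ X₀, B y ≤ 0)
    (hunsafe : ∀ y ∈ Xu, 0 < B y)
    (hcond : ∀ y ∈ X, fderiv ℝ B y (F y) - lam * B y ≤ 0)
    (x : ℝ → (Fin n → ℝ))
    (hx : ∀ t, 0 ≤ t → HasDerivAt x (F (x t)) t)
    (hxX : ∀ t, 0 ≤ t → x t ∈ X)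
    (h0 : x 0 ∈ X₀) :
    ∀ t, 0 ≤ t → x t ∉ Xu := by
  intro t ht hmem
  set g : ℝ → ℝ := fun s => B (x s) with hg
  have hgd : ∀ s, 0 ≤ s → HasDerivAt g (fderiv ℝ B (x s) (F (x s))) s := by
    intro s hs
    have hBd : HasFDerivAt B (fderiv ℝ B (x s)) (x s) :=
      (hB.differentiable one_ne_zero (x s)).hasFDerivAt
    exact hBd.comp_hasDerivAt s (hx s hs)
  have key : ∀ s ∈ Icc (0:ℝ) t, g s ≤ gronwallBound (g 0) lam 0 (s - 0) := by
    apply le_gronwallBound_of_liminf_deriv_right_le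
      (f' := fun s => fderiv ℝ B (x s) (F (x s)))
    · intro s hs
      exact ((hgd s hs.1).continuousAt).continuousWithinAt
    · intro s hs r hr
      have htend : Tendsto (slope g s) (𝓝[>] s) (𝓝 (fderiv ℝ B (x s) (F (x s)))) :=
        (hasDerivAt_iff_tendsto_slope.mp (hgd s hs.1)).mono_left
          (nhdsWithin_mono s fun z hz => ne_of_gt hz)
      have hev : ∀ᶠ z in 𝓝[>] s, slope g s z < r :=
        htend.eventually_lt_const hr
      refine (hev.mono ?_).frequently
      intro z hz
      rw [slope_def_field] at hz
      calc (z - s)⁻¹ * (g z - g s) = (g z - g s) / (z - s) := by ring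
        _ < r := hz
    · exact le_rfl
    · intro s hs
      have := hcond (x s) (hxX s hs.1)
      linarith
  have h1 := key t ⟨ht, le_rfl⟩
  rw [sub_zero, gronwallBound_ε0] at h1
  have h2 : g 0 ≤ 0 := hinit _ h0
  have h3 : g t ≤ 0 :=
    h1.trans (mul_nonpos_of_nonpos_of_nonneg h2 (exp_pos _).le)
  exact absurd (hunsafe _ hmem) (not_lt.mpr h3)
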